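/- For $1 \le i \le n$ and $n \ge 2$, $\frac{\binom{2n-2}{n-i-1}}{\binom{2n}{n-i+1}} - \frac{\binom{2n-2}{n-i-2}}{\binom{2n}{n-i}} = \frac{n-i}{n(2n-1)}$, which gives the up-hook sum $H^{\uparrow}_i(n)$ of two-point correlations in the $B$-MultiTASEP. -/

import Mathlib

/-- Binomial coefficient `C(m, k)` with an integer lower index, which is `0`
when `k < 0`. -/
def binZ (m : ℕ) (k : ℤ) : ℕ := if 0 ≤ k then m.choose k.toNat else 0

/-- The up-hook sum of two-point correlations in the `B`-MultiTASEP: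
`H↑_i(n) = ⟨1̄,1⟩_{n,i-1} - ⟨1̄,1⟩_{n,i}
        = C(2n-2, n-i-1)/C(2n, n-i+1) - C(2n-2, n-i-2)/C(2n, n-i)
        = (n-i)/(n(2n-1))` for `1 ≤ i ≤ n`, `n ≥ 2`. -/
theorem B_up_hook (n i : ℕ) (hn : 2 ≤ n) (hi : 1 ≤ i) (hin : i ≤ n) :
    (binZ (2 * n - 2) ((n : ℤ) - i - 1) : ℚ) / ((2 * n).choose (n - i + 1) : ℚ)
        - (binZ (2 * n - 2) ((n : ℤ) - i - 2) : ℚ) / ((2 * n).choose (n - i) : ℚ)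
      = ((n : ℚ) - i) / (n * (2 * n - 1)) := by
  rcases Nat.eq_or_lt_of_le hin with h | h
  · -- i = n
    subst h
    have e1 : (i : ℤ) - i - 1 = -1 := by ring
    have e2 : (i : ℤ) - i - 2 = -2 := by ring
    simp [binZ, e1, e2]
  · -- i < n, set k = n - i ≥ 1
    set k := n - i with hk
    have hk1 : 1 ≤ k := by omega
    obtain ⟨m, hm⟩ : ∃ m, k = m + 1 := ⟨k - 1, by omega⟩
    obtain ⟨a, ha⟩ : ∃ a, 2 * n - 2 = a := ⟨2 * n - 2, rfl⟩
    have ha2 : 2 * n = a + 2 := by omega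
    have hA : binZ (2 * n - 2) ((n : ℤ) - i - 1) = a.choose m := by
      have h' : (n : ℤ) - i - 1 = ((m : ℕ) : ℤ) := by push_cast; omega
      simp [binZ, h', ha]
    set A := a.choose m with hAdef
    have hBeq : (2 * n).choose (k + 1) = (a + 2).choose (m + 2) := by rw [ha2, hm]
    have hDeq : (2 * n).choose k = (a + 2).choose (m + 1) := by rw [ha2, hm]
    set B := (a + 2).choose (m + 2) with hBdef
    set D := (a + 2).choose (m + 1) with hDdef
    set C := binZ (2 * n - 2) ((n : ℤ) - i - 2) with hCdef
    -- key nat identities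
    have e1 := Nat.add_one_mul_choose_eq a m
    have e2 := Nat.add_one_mul_choose_eq (a + 1) (m + 1)
    have h1 : B * (m + 2) * (m + 1) = A * (a + 2) * (a + 1) := by
      calc B * (m + 2) * (m + 1) = ((a + 2) * (a + 1).choose (m + 1)) * (m + 1) := by
            rw [e2]
        _ = (a + 2) * ((a + 1) * A) := by rw [e1]; ring
        _ = A * (a + 2) * (a + 1) := by ring
    have h2 : D * (m + 1) * m = C * (a + 2) * (a + 1) := by
      rcases Nat.eq_zero_or_pos m with hm0 | hm1
      · have hC0 : C = 0 := by
          have h' : (n : ℤ) - i - 2 = -1 := by push_cast; omega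
          simp [hCdef, binZ, h']
        simp [hm0, hC0]
      · obtain ⟨r, hr⟩ : ∃ r, m = r + 1 := ⟨m - 1, by omega⟩
        have hC : C = a.choose r := by
          have h' : (n : ℤ) - i - 2 = ((r : ℕ) : ℤ) := by push_cast; omega
          simp [hCdef, binZ, h', ha]
        have e1' := Nat.add_one_mul_choose_eq a r
        have e2' := Nat.add_one_mul_choose_eq (a + 1) (r + 1)
        subst hr
        calc D * (r + 2) * (r + 1) = ((a + 2) * (a + 1).choose (r + 1)) * (r + 1) := by
              rw [e2']
          _ = (a + 2) * ((a + 1) * a.choose r) := by rw [e1']; ring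
          _ = C * (a + 2) * (a + 1) := by rw [hC]; ring
    -- cast to ℚ
    have hkc : ((n : ℚ) - i) = (m : ℚ) + 1 := by
      have : ((n - i : ℕ) : ℚ) = (n : ℚ) - i := by
        push_cast [Nat.cast_sub hin]; ring
      rw [← this, ← hk, hm]; push_cast; ring
    have hq1 : (B : ℚ) * ((m : ℚ) + 2) * ((m : ℚ) + 1)
        = (A : ℚ) * ((a : ℚ) + 2) * ((a : ℚ) + 1) := by exact_mod_cast congrArg (Nat.cast : ℕ → ℚ) h1
    have hq2 : (D : ℚ) * ((m : ℚ) + 1) * (m : ℚ)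
        = (C : ℚ) * ((a : ℚ) + 2) * ((a : ℚ) + 1) := by exact_mod_cast congrArg (Nat.cast : ℕ → ℚ) h2
    have hBpos : (0 : ℚ) < B := by
      have : 0 < B := Nat.choose_pos (by omega)
      exact_mod_cast this
    have hDpos : (0 : ℚ) < D := by
      have : 0 < D := Nat.choose_pos (by omega)
      exact_mod_cast this
    have hna : (n : ℚ) * (2 * (n : ℚ) - 1) = ((a : ℚ) + 2) * ((a : ℚ) + 1) / 2 := by
      have : ((2 * n : ℕ) : ℚ) = ((a : ℚ) + 2) := by exact_mod_cast congrArg (Nat.cast : ℕ → ℚ) ha2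
      push_cast at this
      nlinarith [this]
    rw [hA, hBeq, hDeq, hkc, hna]
    rw [div_sub_div _ _ (ne_of_gt hBpos) (ne_of_gt hDpos),
      div_eq_div_iff (by positivity) (by positivity)]
    linear_combination ((B : ℚ) * hq2 - (D : ℚ) * hq1) / 2
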